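/- If 𝔑₁ and 𝔑₂ are von Neumann algebras on ℋ that are split (there exists a type I factor 𝔐 with 𝔑₁ ⊆ 𝔐 ⊆ 𝔑₂'), then 𝔑₁ and 𝔑₂ are Schlieder independent: A₁A₂ ≠ 0 whenever 0 ≠ A₁ ∈ 𝔑₁ and 0 ≠ A₂ ∈ 𝔑₂. -/

import Mathlib

/-- `P` is an (orthogonal) projection operator. -/
def IsProjOp {H : Type*} [NormedAddCommGroup H] [InnerProductSpace ℂ H] [CompleteSpace H]
    (P : H →L[ℂ] H) : Prop :=
  IsIdempotentElem P ∧ IsSelfAdjoint P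

/-- A factor: the center of `S` consists of scalar multiples of the identity. -/
def IsFactorSet {H : Type*} [NormedAddCommGroup H] [InnerProductSpace ℂ H] [CompleteSpace H]
    (S : Set (H →L[ℂ] H)) : Prop :=
  ∀ x ∈ S, (∀ y ∈ S, x * y = y * x) → ∃ c : ℂ, x = c • (1 : H →L[ℂ] H)

/-- `P` is a minimal projection in `S`. -/
def IsMinimalProjIn {H : Type*} [NormedAddCommGroup H] [InnerProductSpace ℂ H]
    [CompleteSpace H] (S : Set (H →L[ℂ] H)) (P : H →L[ℂ] H) : Prop :=
  P ∈ S ∧ IsProjOp P ∧ P ≠ 0 ∧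
    ∀ Q ∈ S, IsProjOp Q → Q * P = Q → Q = 0 ∨ Q = P

/-- A type I factor: a factor possessing a minimal projection. -/
def IsTypeIFactorSet {H : Type*} [NormedAddCommGroup H] [InnerProductSpace ℂ H]
    [CompleteSpace H] (S : Set (H →L[ℂ] H)) : Prop :=
  IsFactorSet S ∧ ∃ P, IsMinimalProjIn S P

/-- If `T` and `star T` both map a closed submodule `K` into itself, then `T` commutes with
the orthogonal projection onto `K`. -/
theorem comm_proj_of_invariant {H : Type*} [NormedAddCommGroup H] [InnerProductSpace ℂ H]
    [CompleteSpace H] (K : Submodule ℂ H) [K.HasOrthogonalProjection]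
    (T : H →L[ℂ] H) (hT : ∀ x ∈ K, T x ∈ K) (hT' : ∀ x ∈ K, star T x ∈ K) :
    T * (K.subtypeL ∘L K.orthogonalProjectionOnto) = (K.subtypeL ∘L K.orthogonalProjectionOnto) * T := by
  set E := K.subtypeL ∘L K.orthogonalProjectionOnto with hE
  have hEmem : ∀ x ∈ K, E x = x := by
    intro x hx
    simp only [hE, ContinuousLinearMap.comp_apply, Submodule.subtypeL_apply]
    exact congrArg _ (Submodule.orthogonalProjectionOnto_mem_subspace_eq_self (⟨x, hx⟩ : K))
  have hEorth : ∀ x ∈ Kᗮ, E x = 0 := by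
    intro x hx
    simp only [hE, ContinuousLinearMap.comp_apply, Submodule.subtypeL_apply]
    rw [Submodule.orthogonalProjectionOnto_apply_of_mem_orthogonal hx]
    rfl
  ext x
  have hx1 : (E x : H) ∈ K := by
    simp only [hE, ContinuousLinearMap.comp_apply, Submodule.subtypeL_apply]
    exact (K.orthogonalProjectionOnto x).2
  have hx2 : x - E x ∈ Kᗮ := K.sub_starProjection_mem_orthogonal x
  have hTx2 : T (x - E x) ∈ Kᗮ := by
    rw [Submodule.mem_orthogonal]
    intro u hu
    have h1 : inner (𝕜 := ℂ) (ContinuousLinearMap.adjoint T u) (x - E x) = 0 := by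
      have := (Submodule.mem_orthogonal K (x - E x)).mp hx2
      apply this
      have := hT' u hu
      rwa [ContinuousLinearMap.star_eq_adjoint] at this
    rw [← ContinuousLinearMap.adjoint_inner_left T (x - E x) u]
    exact h1
  have key : T x = T (E x) + T (x - E x) := by rw [← map_add, add_sub_cancel]
  calc (T * E) x = T (E x) := rfl
    _ = E (T (E x)) := (hEmem _ (hT _ hx1)).symm
    _ = E (T (E x)) + E (T (x - E x)) := by rw [hEorth _ hTx2, add_zero]
    _ = E (T (E x) + T (x - E x)) := (map_add E _ _).symm
    _ = E (T x) := by rw [← key]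
    _ = (E * T) x := rfl

/-- If `𝔑₁` and `𝔑₂` are split (there is a type I factor `𝔐` with `𝔑₁ ⊆ 𝔐 ⊆ 𝔑₂'`),
then they are Schlieder independent. -/
theorem schlieder_of_split {H : Type*} [NormedAddCommGroup H] [InnerProductSpace ℂ H]
    [CompleteSpace H]
    (N₁ N₂ M : VonNeumannAlgebra H)
    (hM : IsTypeIFactorSet (M : Set (H →L[ℂ] H)))
    (h₁ : (N₁ : Set (H →L[ℂ] H)) ⊆ (M : Set (H →L[ℂ] H)))
    (h₂ : (M : Set (H →L[ℂ] H)) ⊆ (N₂.commutant : Set (H →L[ℂ] H))) :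
    ∀ a ∈ N₁, ∀ b ∈ N₂, a ≠ 0 → b ≠ 0 → a * b ≠ 0 := by
  intro a haN b hbN ha hb hab
  -- `a ∈ M`
  have haM : a ∈ (M : Set (H →L[ℂ] H)) := h₁ haN
  -- `b` commutes with every element of `M`, i.e. `b ∈ M.commutant`
  have hbM' : b ∈ M.commutant := by
    rw [VonNeumannAlgebra.mem_commutant_iff]
    intro g hg
    exact (VonNeumannAlgebra.mem_commutant_iff.mp (h₂ hg) b hbN).symm
  -- The generating set: `n (b ξ)` for `n ∈ M'`.
  set SGen : Set H := {y | ∃ n ∈ M.commutant, ∃ ξ : H, y = n (b ξ)} with hSGen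
  set K : Submodule ℂ H := (Submodule.span ℂ SGen).topologicalClosure with hK
  have hKclosed : IsClosed (K : Set H) := Submodule.isClosed_topologicalClosure _
  haveI : CompleteSpace K := hKclosed.completeSpace_coe
  -- invariance of `K` under an operator that preserves the span
  have invar : ∀ T : H →L[ℂ] H, (∀ y ∈ SGen, T y ∈ SGen) → ∀ x ∈ K, T x ∈ K := by
    intro T hTgen x hx
    have hspan : Submodule.span ℂ SGen ≤ (Submodule.comap (T : H →ₗ[ℂ] H) K) := by
      rw [Submodule.span_le]
      intro y hy
      have : T y ∈ SGen := hTgen y hy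
      exact Submodule.le_topologicalClosure _ (Submodule.subset_span this)
    have hclosed : IsClosed ((Submodule.comap (T : H →ₗ[ℂ] H) K) : Set H) :=
      hKclosed.preimage T.continuous
    have := Submodule.topologicalClosure_minimal _ hspan hclosed
    exact this hx
  -- elements of `M` preserve the generating set
  have hMgen : ∀ m ∈ (M : Set (H →L[ℂ] H)), ∀ y ∈ SGen, m y ∈ SGen := by
    rintro m hm y ⟨n, hn, ξ, rfl⟩
    have hcomm : m * n = n * m := VonNeumannAlgebra.mem_commutant_iff.mp hn m hm
    have hcommb : m * b = b * m := VonNeumannAlgebra.mem_commutant_iff.mp hbM' m hm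
    refine ⟨n, hn, m ξ, ?_⟩
    calc m (n (b ξ)) = (m * n) (b ξ) := rfl
      _ = (n * m) (b ξ) := by rw [hcomm]
      _ = n ((m * b) ξ) := rfl
      _ = n ((b * m) ξ) := by rw [hcommb]
      _ = n (b (m ξ)) := rfl
  -- elements of `M'` preserve the generating set
  have hM'gen : ∀ n₀ ∈ M.commutant, ∀ y ∈ SGen, n₀ y ∈ SGen := by
    rintro n₀ hn₀ y ⟨n, hn, ξ, rfl⟩
    exact ⟨n₀ * n, mul_mem hn₀ hn, ξ, rfl⟩
  set E : H →L[ℂ] H := K.subtypeL ∘L K.orthogonalProjectionOnto with hEdef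
  -- E commutes with every element of M'
  have hEM' : ∀ n ∈ M.commutant, n * E = E * n := by
    intro n hn
    exact comm_proj_of_invariant K n (invar n (hM'gen n hn))
      (invar (star n) (hM'gen (star n) (star_mem hn)))
  -- E commutes with every element of M
  have hEM : ∀ m ∈ (M : Set (H →L[ℂ] H)), m * E = E * m := by
    intro m hm
    exact comm_proj_of_invariant K m (invar m (hMgen m hm))
      (invar (star m) (hMgen (star m) (star_mem hm)))
  -- E ∈ M'' = M
  have hEmemM : E ∈ (M : Set (H →L[ℂ] H)) := by
    rw [← M.centralizer_centralizer]
    intro n hn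
    have hn' : n ∈ M.commutant := by
      rw [VonNeumannAlgebra.mem_commutant_iff]
      intro g hg
      exact hn g hg
    exact hEM' n hn'
  -- by the factor property, E = c • 1
  obtain ⟨c, hc⟩ := hM.1 E hEmemM (fun y hy => (hEM y hy).symm)
  -- E fixes elements of K
  have hEfix : ∀ x ∈ K, E x = x := by
    intro x hx
    simp only [hEdef, ContinuousLinearMap.comp_apply, Submodule.subtypeL_apply]
    exact congrArg _ (Submodule.orthogonalProjectionOnto_mem_subspace_eq_self (⟨x, hx⟩ : K))
  -- b ξ₀ ≠ 0 for some ξ₀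
  have : ∃ ξ₀ : H, b ξ₀ ≠ 0 := by
    by_contra h
    push_neg at h
    exact hb (ContinuousLinearMap.ext fun ξ => h ξ)
  obtain ⟨ξ₀, hξ₀⟩ := this
  have hbmem : b ξ₀ ∈ K := by
    apply Submodule.le_topologicalClosure
    apply Submodule.subset_span
    exact ⟨1, one_mem _, ξ₀, rfl⟩
  -- E (b ξ₀) = b ξ₀, so c • b ξ₀ = b ξ₀, whence c = 1
  have hcb : c • (b ξ₀) = b ξ₀ := by
    have := hEfix _ hbmem
    rw [hc] at this
    simpa using this
  have hc1 : c = 1 := by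
    by_contra hcne
    have : (c - 1) • (b ξ₀) = 0 := by rw [sub_smul, one_smul, hcb, sub_self]
    rcases smul_eq_zero.mp this with h | h
    · exact hcne (by linear_combination h)
    · exact hξ₀ h
  have hE1 : E = 1 := by rw [hc, hc1, one_smul]
  -- a kills K
  have haK : ∀ x ∈ K, a x = 0 := by
    intro x hx
    have hspan : Submodule.span ℂ SGen ≤ LinearMap.ker (a : H →ₗ[ℂ] H) := by
      rw [Submodule.span_le]
      rintro y ⟨n, hn, ξ, rfl⟩
      have hcomm : a * n = n * a := VonNeumannAlgebra.mem_commutant_iff.mp hn a haM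
      have : a (n (b ξ)) = n ((a * b) ξ) := by
        calc a (n (b ξ)) = (a * n) (b ξ) := rfl
          _ = (n * a) (b ξ) := by rw [hcomm]
          _ = n ((a * b) ξ) := rfl
      simp only [SetLike.mem_coe, LinearMap.mem_ker, ContinuousLinearMap.coe_coe]
      rw [this, hab]
      simp
    have hker : IsClosed ((LinearMap.ker (a : H →ₗ[ℂ] H) : Submodule ℂ H) : Set H) := by
      have : ((LinearMap.ker (a : H →ₗ[ℂ] H) : Submodule ℂ H) : Set H) = a ⁻¹' {0} := rfl
      rw [this]
      exact isClosed_singleton.preimage a.continuous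
    have := Submodule.topologicalClosure_minimal _ hspan hker
    exact this hx
  -- contradiction: a = a * E = 0
  apply ha
  ext x
  have : a (E x) = 0 := haK _ (by
    simp only [hEdef, ContinuousLinearMap.comp_apply, Submodule.subtypeL_apply]
    exact (K.orthogonalProjectionOnto x).2)
  rw [hE1] at this
  simpa using this
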